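/- If φ is a basic automorphism of F(x,y) with abelianization matrix M(φ), and (U, V), (X, Y) are pairs of positive integers with U ≤ V and (U,V)·M(φ) = (X,Y), then U = min(Y mod X, X − (Y mod X)) and V = max(Y mod X, X − (Y mod X)). -/
import Mathlib


abbrev F2 := FreeGroup (Fin 2)

/-- The generator `x` of the free group of rank 2. -/
def xg : F2 := FreeGroup.of 0

/-- The generator `y` of the free group of rank 2. -/
def yg : F2 := FreeGroup.of 1

/-- The exponent sum of the `i`-th generator in a word `w`. -/
def expSum (i : Fin 2) (w : F2) : ℤ :=
  Multiplicative.toAdd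
    ((FreeGroup.lift fun j => Multiplicative.ofAdd (if j = i then (1 : ℤ) else 0)) w)

/-- An element is primitive if it is the image of `x` under an automorphism. -/
def IsPrimitive (w : F2) : Prop := ∃ θ : F2 ≃* F2, θ xg = w

/-- A palindrome: the reduced word reads the same forwards and backwards. -/
def IsPalindrome (w : F2) : Prop := w.toWord.reverse = w.toWord

/-- Only positive exponents appear in the reduced word of `w`. -/
def PosWord (w : F2) : Prop := ∀ l ∈ w.toWord, l.2 = true

/-- `b` is obtained from `a` by right multiplication by the abelianization matrix
`[[1,n],[1,n+1]]` or `[[1,n+1],[1,n]]` of a basic automorphism. -/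
def IsBasicMatrixStep (a b : ℤ × ℤ) : Prop :=
  ∃ n : ℕ, b = (a.1 + a.2, n * a.1 + (n + 1) * a.2) ∨
           b = (a.1 + a.2, (n + 1) * a.1 + n * a.2)

theorem basic_step_inverse (U V X Y : ℤ) (hU : 0 < U) (hV : 0 < V) (hUV : U ≤ V)
    (hX : 0 < X) (hY : 0 < Y) (hstep : IsBasicMatrixStep (U, V) (X, Y)) :
    U = min (Y % X) (X - Y % X) ∧ V = max (Y % X) (X - Y % X) := by
  obtain ⟨n, h | h⟩ := hstep <;> simp only [Prod.mk.injEq] at h <;>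
    obtain ⟨h1, h2⟩ := h <;> subst h1 <;> subst h2
  · have e : (n : ℤ) * U + ((n : ℤ) + 1) * V = V + (U + V) * n := by ring
    rw [e, Int.add_mul_emod_self_left, Int.emod_eq_of_lt hV.le (by omega)]
    omega
  · have e : ((n : ℤ) + 1) * U + (n : ℤ) * V = U + (U + V) * n := by ring
    rw [e, Int.add_mul_emod_self_left, Int.emod_eq_of_lt hU.le (by omega)]
    omega
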